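/- Under assumptions (a) and (b), for t > 0 let I_t = {x > 0 : ∃ y > 0, L_t(x,y) = 0} and J_t = {y > 0 : ∃ x > 0, L_t(x,y) = 0}. Then: if 0 < t < t₀ the sets I_t and J_t are empty; if t = t₀ the sets I_t and J_t are singletons; and if t > t₀ then I_t and J_t are compact intervals with nonempty interior, I_t = [x₂, x₃] with 0 < x₂ < x₃ and J_t = [y₂, y₃] with 0 < y₂ < y₃. In particular, t₀ = inf{t > 0 : I_t ≠ ∅} and t₀ is the unique t > 0 for which I_t is a singleton (i.e., for which x₂ = x₃). -/

import Mathlib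

open Finset Filter

/-- Cyclic list of the eight neighbor weights
`p₁,₁, p₁,₀, p₁,₋₁, p₀,₋₁, p₋₁,₋₁, p₋₁,₀, p₋₁,₁, p₀,₁`. -/
def cyc (p : ℤ → ℤ → ℝ) : Fin 8 → ℝ :=
  ![p 1 1, p 1 0, p 1 (-1), p 0 (-1), p (-1) (-1), p (-1) 0, p (-1) 1, p 0 1]

/-- The Laplace transform `φ(a₁,a₂) = Σ p_{k,ℓ} e^{k a₁ + ℓ a₂}` (small steps case). -/
noncomputable def phi (p : ℤ → ℤ → ℝ) (a : ℝ × ℝ) : ℝ :=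
  ∑ k ∈ Finset.Icc (-1 : ℤ) 1, ∑ l ∈ Finset.Icc (-1 : ℤ) 1,
    p k l * Real.exp (k * a.1 + l * a.2)

/-- `f` is `t`-harmonic for the walk with weights `p` killed at the boundary of the quadrant:
(1) harmonicity in the interior, (2) positivity in the interior, (3) vanishing on the boundary
and the exterior of the quadrant. -/
def THarmonic (p : ℤ → ℤ → ℝ) (t : ℝ) (f : ℤ → ℤ → ℝ) : Prop :=
  (∀ i j : ℤ, 1 ≤ i → 1 ≤ j →
    ∑ k ∈ Finset.Icc (-1 : ℤ) 1, ∑ l ∈ Finset.Icc (-1 : ℤ) 1,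
      p k l * f (i + k) (j + l) = t * f i j) ∧
  (∀ i j : ℤ, 1 ≤ i → 1 ≤ j → 0 < f i j) ∧
  (∀ i j : ℤ, i ≤ 0 ∨ j ≤ 0 → f i j = 0)

/-- The kernel `L_t(x,y) = xy(Σ_{k,ℓ} p_{k,ℓ} x^{−k} y^{−ℓ} − t)`. -/
noncomputable def LkerZ (p : ℤ → ℤ → ℝ) (t x y : ℝ) : ℝ :=
  x * y * ((∑ k ∈ Finset.Icc (-1 : ℤ) 1, ∑ l ∈ Finset.Icc (-1 : ℤ) 1,
    p k l * x ^ (-k) * y ^ (-l)) - t)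

/-- `I_t = {x > 0 : ∃ y > 0, L_t(x,y) = 0}`. -/
noncomputable def Iset (p : ℤ → ℤ → ℝ) (t : ℝ) : Set ℝ :=
  {x : ℝ | 0 < x ∧ ∃ y : ℝ, 0 < y ∧ LkerZ p t x y = 0}

/-- `J_t = {y > 0 : ∃ x > 0, L_t(x,y) = 0}`. -/
noncomputable def Jset (p : ℤ → ℤ → ℝ) (t : ℝ) : Set ℝ :=
  {y : ℝ | 0 < y ∧ ∃ x : ℝ, 0 < x ∧ LkerZ p t x y = 0}

open Real

lemma sum_expand (f : ℤ → ℝ) : ∑ k ∈ Finset.Icc (-1 : ℤ) 1, f k = f (-1) + f 0 + f 1 := by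
  have : Finset.Icc (-1 : ℤ) 1 = {-1, 0, 1} := by decide
  rw [this]
  rw [Finset.sum_insert (by decide), Finset.sum_insert (by decide), Finset.sum_singleton]
  ring

noncomputable def Phi (p : ℤ → ℤ → ℝ) (a b : ℝ) : ℝ :=
  p 1 1 * Real.exp (a + b) + p 0 1 * Real.exp b + p (-1) 1 * Real.exp (-a + b)
  + p 1 0 * Real.exp a + p (-1) 0 * Real.exp (-a)
  + p 1 (-1) * Real.exp (a - b) + p 0 (-1) * Real.exp (-b) + p (-1) (-1) * Real.exp (-a - b)

lemma phi_eq (p : ℤ → ℤ → ℝ) (hp00 : p 0 0 = 0) (a b : ℝ) :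
    phi p (a, b) = Phi p a b := by
  unfold phi Phi
  rw [sum_expand, sum_expand, sum_expand, sum_expand]
  push_cast
  rw [hp00]
  ring_nf

lemma Lker_iff (p : ℤ → ℤ → ℝ) (hp00 : p 0 0 = 0) (t x y : ℝ) (hx : 0 < x) (hy : 0 < y) :
    LkerZ p t x y = 0 ↔ Phi p (-Real.log x) (-Real.log y) = t := by
  unfold LkerZ
  rw [mul_eq_zero, mul_eq_zero]
  have hx0 := hx.ne'
  have hy0 := hy.ne'
  have hS : (∑ k ∈ Finset.Icc (-1 : ℤ) 1, ∑ l ∈ Finset.Icc (-1 : ℤ) 1,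
      p k l * x ^ (-k) * y ^ (-l)) = Phi p (-Real.log x) (-Real.log y) := by
    rw [sum_expand, sum_expand, sum_expand, sum_expand]
    unfold Phi
    simp only [neg_neg, zpow_one, zpow_zero, zpow_neg, neg_zero]
    rw [hp00]
    simp only [sub_eq_add_neg, neg_neg, Real.exp_add, Real.exp_neg,
      Real.exp_log hx, Real.exp_log hy]
    field_simp
    ring
  rw [hS]
  constructor
  · rintro ((h|h)|h)
    · exact absurd h hx0
    · exact absurd h hy0
    · linarith [sub_eq_zero.mp h]
  · intro h
    right; rw [h]; ring


noncomputable def Ac (p : ℤ → ℤ → ℝ) (a : ℝ) : ℝ :=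
  p 1 (-1) * Real.exp a + p 0 (-1) + p (-1) (-1) * Real.exp (-a)
noncomputable def Bc (p : ℤ → ℤ → ℝ) (a : ℝ) : ℝ :=
  p 1 0 * Real.exp a + p (-1) 0 * Real.exp (-a)
noncomputable def Cc (p : ℤ → ℤ → ℝ) (a : ℝ) : ℝ :=
  p 1 1 * Real.exp a + p 0 1 + p (-1) 1 * Real.exp (-a)

lemma Phi_ABC (p : ℤ → ℤ → ℝ) (a b : ℝ) :
    Phi p a b = Cc p a * Real.exp b + Bc p a + Ac p a * Real.exp (-b) := by
  unfold Phi Ac Bc Cc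
  rw [show a + b = a + b from rfl]
  simp only [sub_eq_add_neg, neg_add, Real.exp_add]
  ring

noncomputable def hm (p : ℤ → ℤ → ℝ) (a : ℝ) : ℝ :=
  Bc p a + 2 * Real.sqrt (Ac p a * Cc p a)

lemma Ac_pos (p : ℤ → ℤ → ℝ) (hpos : ∀ k l : ℤ, 0 ≤ p k l) (h : p 1 (-1) ≠ 0 ∨ p 0 (-1) ≠ 0 ∨ p (-1) (-1) ≠ 0) (a : ℝ) : 0 < Ac p a := by
  have e1 := Real.exp_pos a
  have e2 := Real.exp_pos (-a)
  have h1 := hpos 1 (-1); have h2 := hpos 0 (-1); have h3 := hpos (-1) (-1)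
  unfold Ac
  rcases h with h|h|h
  · nlinarith [h1.lt_of_ne (Ne.symm h)]
  · nlinarith [h2.lt_of_ne (Ne.symm h)]
  · nlinarith [h3.lt_of_ne (Ne.symm h)]

lemma Cc_pos (p : ℤ → ℤ → ℝ) (hpos : ∀ k l : ℤ, 0 ≤ p k l) (h : p 1 1 ≠ 0 ∨ p 0 1 ≠ 0 ∨ p (-1) 1 ≠ 0) (a : ℝ) : 0 < Cc p a := by
  have e1 := Real.exp_pos a
  have e2 := Real.exp_pos (-a)
  have h1 := hpos 1 1; have h2 := hpos 0 1; have h3 := hpos (-1) 1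
  unfold Cc
  rcases h with h|h|h
  · nlinarith [h1.lt_of_ne (Ne.symm h)]
  · nlinarith [h2.lt_of_ne (Ne.symm h)]
  · nlinarith [h3.lt_of_ne (Ne.symm h)]

lemma Bc_nonneg (p : ℤ → ℤ → ℝ) (hpos : ∀ k l : ℤ, 0 ≤ p k l) (a : ℝ) : 0 ≤ Bc p a := by
  have e1 := (Real.exp_pos a).le
  have e2 := (Real.exp_pos (-a)).le
  have h1 := hpos 1 0; have h2 := hpos (-1) 0
  unfold Bc; positivity

lemma hm_le_Phi (p : ℤ → ℤ → ℝ) {a : ℝ} (hA : 0 < Ac p a) (hC : 0 < Cc p a) (b : ℝ) : hm p a ≤ Phi p a b := by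
  rw [Phi_ABC, hm]
  have key : 2 * Real.sqrt (Ac p a * Cc p a) ≤ Cc p a * Real.exp b + Ac p a * Real.exp (-b) := by
    have h1 : Real.sqrt (Ac p a * Cc p a)
        = Real.sqrt (Cc p a * Real.exp b) * Real.sqrt (Ac p a * Real.exp (-b)) := by
      rw [← Real.sqrt_mul (by positivity)]
      congr 1
      rw [Real.exp_neg]
      field_simp
    rw [h1]
    nlinarith [Real.sq_sqrt (by positivity : (0:ℝ) ≤ Cc p a * Real.exp b),
      Real.sq_sqrt (by positivity : (0:ℝ) ≤ Ac p a * Real.exp (-b)),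
      sq_nonneg (Real.sqrt (Cc p a * Real.exp b) - Real.sqrt (Ac p a * Real.exp (-b)))]
  linarith

lemma hm_attained (p : ℤ → ℤ → ℝ) {a : ℝ} (hA : 0 < Ac p a) (hC : 0 < Cc p a) :
    ∃ b : ℝ, Phi p a b = hm p a := by
  set A := Ac p a with hAdef; set C := Cc p a with hCdef
  refine ⟨Real.log (Real.sqrt (A / C)), ?_⟩
  have hs : 0 < Real.sqrt (A / C) := Real.sqrt_pos.mpr (by positivity)
  rw [Phi_ABC, hm, Real.exp_neg, Real.exp_log hs, ← hAdef, ← hCdef]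
  rw [Real.sqrt_div hA.le]
  have hsA : Real.sqrt A ^ 2 = A := Real.sq_sqrt hA.le
  have hsC : Real.sqrt C ^ 2 = C := Real.sq_sqrt hC.le
  have hsApos : 0 < Real.sqrt A := Real.sqrt_pos.mpr hA
  have hsCpos : 0 < Real.sqrt C := Real.sqrt_pos.mpr hC
  rw [Real.sqrt_mul hA.le]
  field_simp
  nlinarith [hsA, hsC]

lemma Phi_continuous (p : ℤ → ℤ → ℝ) (a : ℝ) : Continuous fun b => Phi p a b := by
  unfold Phi; continuity

lemma Phi_continuous' (p : ℤ → ℤ → ℝ) (b : ℝ) : Continuous fun a => Phi p a b := by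
  unfold Phi; continuity

lemma exists_b_iff (p : ℤ → ℤ → ℝ) {a : ℝ} (hpos : ∀ k l : ℤ, 0 ≤ p k l) (hA : 0 < Ac p a) (hC : 0 < Cc p a) (t : ℝ) :
    (∃ b : ℝ, Phi p a b = t) ↔ hm p a ≤ t := by
  constructor
  · rintro ⟨b, rfl⟩
    exact hm_le_Phi p hA hC b
  · intro ht
    obtain ⟨b0, hb0⟩ := hm_attained p hA hC
    set b1 := max b0 (Real.log ((|t| + 1) / Cc p a)) with hb1
    have hphi1 : t ≤ Phi p a b1 := by
      have h1 : Real.log ((|t| + 1) / Cc p a) ≤ b1 := le_max_right _ _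
      have h2 : (|t| + 1) / Cc p a ≤ Real.exp b1 := by
        calc (|t| + 1) / Cc p a = Real.exp (Real.log ((|t| + 1) / Cc p a)) := by
              rw [Real.exp_log (by positivity)]
          _ ≤ Real.exp b1 := Real.exp_le_exp.mpr h1
      have h3 : |t| + 1 ≤ Cc p a * Real.exp b1 := by
        rw [div_le_iff₀ hC] at h2; linarith [mul_comm (Cc p a) (Real.exp b1) ▸ h2]
      have h4 : 0 ≤ Bc p a := Bc_nonneg p hpos a
      have h5 : 0 ≤ Ac p a * Real.exp (-b1) := by positivity
      rw [Phi_ABC]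
      calc t ≤ |t| + 1 := by cases abs_cases t <;> linarith
        _ ≤ Cc p a * Real.exp b1 + Bc p a + Ac p a * Real.exp (-b1) := by linarith
    have hsub := intermediate_value_Icc (le_max_left b0 _ : b0 ≤ b1)
      ((Phi_continuous p a).continuousOn)
    have : t ∈ Set.Icc (Phi p a b0) (Phi p a b1) := ⟨hb0 ▸ ht, hphi1⟩
    obtain ⟨b, _, hb⟩ := hsub this
    exact ⟨b, hb⟩
def S8 : Finset (ℤ × ℤ) := {(1,1),(0,1),(-1,1),(1,0),(-1,0),(1,-1),(0,-1),(-1,-1)}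

lemma Phi_sum (p : ℤ → ℤ → ℝ) (a b : ℝ) :
    Phi p a b = ∑ s ∈ S8, p s.1 s.2 * Real.exp (s.1 * a + s.2 * b) := by
  rw [show S8 = {(1,1),(0,1),(-1,1),(1,0),(-1,0),(1,-1),(0,-1),(-1,-1)} from rfl]
  rw [Finset.sum_insert (by decide), Finset.sum_insert (by decide),
    Finset.sum_insert (by decide), Finset.sum_insert (by decide),
    Finset.sum_insert (by decide), Finset.sum_insert (by decide),
    Finset.sum_insert (by decide), Finset.sum_singleton]
  unfold Phi
  push_cast
  ring_nf

lemma witness (p : ℤ → ℤ → ℝ)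
    (hr1 : p 1 1 ≠ 0 ∨ p 0 1 ≠ 0 ∨ p (-1) 1 ≠ 0)
    (hr2 : p 1 (-1) ≠ 0 ∨ p 0 (-1) ≠ 0 ∨ p (-1) (-1) ≠ 0)
    (hc1 : p 1 1 ≠ 0 ∨ p 1 0 ≠ 0 ∨ p 1 (-1) ≠ 0)
    (hdiag : p 1 0 ≠ 0 ∨ p 1 (-1) ≠ 0 ∨ p 0 (-1) ≠ 0)
    (hadiag : p 0 (-1) ≠ 0 ∨ p (-1) (-1) ≠ 0 ∨ p (-1) 0 ≠ 0)
    (d1 d2 : ℝ) (hd1 : d1 ≠ 0) :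
    ∃ s ∈ S8, p s.1 s.2 ≠ 0 ∧ (s.1 : ℝ) * d1 + (s.2 : ℝ) * d2 ≠ 0 := by
  by_contra hcon
  push_neg at hcon
  have H : ∀ k l : ℤ, (k, l) ∈ S8 → p k l ≠ 0 → (k : ℝ) * d1 + (l : ℝ) * d2 = 0 := by
    intro k l hm hne; exact hcon (k, l) hm hne
  have e1 : p 1 1 ≠ 0 → d1 + d2 = 0 := fun h => by have := H 1 1 (by decide) h; push_cast at this; linarith
  have e2 : p 0 1 ≠ 0 → d2 = 0 := fun h => by have := H 0 1 (by decide) h; push_cast at this; linarith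
  have e3 : p (-1) 1 ≠ 0 → -d1 + d2 = 0 := fun h => by have := H (-1) 1 (by decide) h; push_cast at this; linarith
  have e4 : p 1 0 ≠ 0 → d1 = 0 := fun h => by have := H 1 0 (by decide) h; push_cast at this; linarith
  have e5 : p (-1) 0 ≠ 0 → d1 = 0 := fun h => by have := H (-1) 0 (by decide) h; push_cast at this; linarith
  have e6 : p 1 (-1) ≠ 0 → d1 - d2 = 0 := fun h => by have := H 1 (-1) (by decide) h; push_cast at this; linarith
  have e7 : p 0 (-1) ≠ 0 → d2 = 0 := fun h => by have := H 0 (-1) (by decide) h; push_cast at this; linarith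
  have e8 : p (-1) (-1) ≠ 0 → d1 + d2 = 0 := fun h => by have := H (-1) (-1) (by decide) h; push_cast at this; linarith
  rcases hr1 with h1|h1|h1 <;> rcases hr2 with h2|h2|h2
  · exact hd1 (by linarith [e1 h1, e6 h2])
  · exact hd1 (by linarith [e1 h1, e7 h2])
  · -- d1+d2=0 and -d1-d2... e8 gives d1+d2=0 too; use hdiag
    rcases hdiag with h|h|h
    · exact hd1 (e4 h)
    · exact hd1 (by linarith [e1 h1, e6 h])
    · exact hd1 (by linarith [e1 h1, e7 h])
  · exact hd1 (by linarith [e2 h1, e6 h2])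
  · rcases hc1 with h|h|h
    · exact hd1 (by linarith [e2 h1, e1 h])
    · exact hd1 (e4 h)
    · exact hd1 (by linarith [e2 h1, e6 h])
  · exact hd1 (by linarith [e2 h1, e8 h2])
  · -- e3 : -d1+d2=0, e6: d1-d2=0: consistent (d2=d1); use hadiag
    rcases hadiag with h|h|h
    · exact hd1 (by linarith [e3 h1, e7 h])
    · exact hd1 (by linarith [e3 h1, e8 h])
    · exact hd1 (e5 h)
  · exact hd1 (by linarith [e3 h1, e7 h2])
  · exact hd1 (by linarith [e3 h1, e8 h2])

lemma term_le (c u v lam mu : ℝ) (hc : 0 ≤ c) (hl : 0 ≤ lam) (hmu : 0 ≤ mu) (hs : lam + mu = 1) :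
    c * Real.exp (lam * u + mu * v) ≤ lam * (c * Real.exp u) + mu * (c * Real.exp v) := by
  have := convexOn_exp.2 (Set.mem_univ u) (Set.mem_univ v) hl hmu hs
  simp only [smul_eq_mul] at this
  nlinarith [this]

lemma term_lt (c u v lam mu : ℝ) (hc : 0 < c) (huv : u ≠ v) (hl : 0 < lam) (hmu : 0 < mu)
    (hs : lam + mu = 1) :
    c * Real.exp (lam * u + mu * v) < lam * (c * Real.exp u) + mu * (c * Real.exp v) := by
  have := strictConvexOn_exp.2 (Set.mem_univ u) (Set.mem_univ v) huv hl hmu hs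
  simp only [smul_eq_mul] at this
  nlinarith [this]

lemma Phi_strict (p : ℤ → ℤ → ℝ) (hpos : ∀ k l : ℤ, 0 ≤ p k l)
    (hr1 : p 1 1 ≠ 0 ∨ p 0 1 ≠ 0 ∨ p (-1) 1 ≠ 0)
    (hr2 : p 1 (-1) ≠ 0 ∨ p 0 (-1) ≠ 0 ∨ p (-1) (-1) ≠ 0)
    (hc1 : p 1 1 ≠ 0 ∨ p 1 0 ≠ 0 ∨ p 1 (-1) ≠ 0)
    (hdiag : p 1 0 ≠ 0 ∨ p 1 (-1) ≠ 0 ∨ p 0 (-1) ≠ 0)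
    (hadiag : p 0 (-1) ≠ 0 ∨ p (-1) (-1) ≠ 0 ∨ p (-1) 0 ≠ 0)
    (a1 b1 a2 b2 lam mu : ℝ) (ha : a1 ≠ a2) (hl : 0 < lam) (hmu : 0 < mu) (hs : lam + mu = 1) :
    Phi p (lam * a1 + mu * a2) (lam * b1 + mu * b2) < lam * Phi p a1 b1 + mu * Phi p a2 b2 := by
  rw [Phi_sum, Phi_sum, Phi_sum, Finset.mul_sum, Finset.mul_sum, ← Finset.sum_add_distrib]
  obtain ⟨s0, hs0mem, hs0ne, hs0dir⟩ := witness p hr1 hr2 hc1 hdiag hadiag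
    (a1 - a2) (b1 - b2) (sub_ne_zero.mpr ha)
  apply Finset.sum_lt_sum
  · intro s _
    have harg : (s.1 : ℝ) * (lam * a1 + mu * a2) + (s.2 : ℝ) * (lam * b1 + mu * b2)
        = lam * ((s.1:ℝ) * a1 + s.2 * b1) + mu * ((s.1:ℝ) * a2 + s.2 * b2) := by ring
    rw [harg]
    exact term_le _ _ _ _ _ (hpos s.1 s.2) hl.le hmu.le hs
  · refine ⟨s0, hs0mem, ?_⟩
    have harg : (s0.1 : ℝ) * (lam * a1 + mu * a2) + (s0.2 : ℝ) * (lam * b1 + mu * b2)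
        = lam * ((s0.1:ℝ) * a1 + s0.2 * b1) + mu * ((s0.1:ℝ) * a2 + s0.2 * b2) := by ring
    rw [harg]
    refine term_lt _ _ _ _ _ ((hpos s0.1 s0.2).lt_of_ne (Ne.symm hs0ne)) ?_ hl hmu hs
    intro hEq
    apply hs0dir
    have : (s0.1:ℝ) * (a1 - a2) + (s0.2:ℝ) * (b1 - b2)
        = ((s0.1:ℝ) * a1 + s0.2 * b1) - ((s0.1:ℝ) * a2 + s0.2 * b2) := by ring
    rw [this, hEq, sub_self]

section HM

variable {p : ℤ → ℤ → ℝ} {t0 : ℝ}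

/-- Bundle of standing hypotheses. -/
structure Good (p : ℤ → ℤ → ℝ) (t0 : ℝ) : Prop where
  hpos : ∀ k l : ℤ, 0 ≤ p k l
  hr1 : p 1 1 ≠ 0 ∨ p 0 1 ≠ 0 ∨ p (-1) 1 ≠ 0
  hr2 : p 1 (-1) ≠ 0 ∨ p 0 (-1) ≠ 0 ∨ p (-1) (-1) ≠ 0
  hc1 : p 1 1 ≠ 0 ∨ p 1 0 ≠ 0 ∨ p 1 (-1) ≠ 0
  hdiag : p 1 0 ≠ 0 ∨ p 1 (-1) ≠ 0 ∨ p 0 (-1) ≠ 0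
  hadiag : p 0 (-1) ≠ 0 ∨ p (-1) (-1) ≠ 0 ∨ p (-1) 0 ≠ 0
  hlow : ∀ a b : ℝ, t0 ≤ Phi p a b
  hmin : ∃ a b : ℝ, Phi p a b = t0

namespace Good

lemma hA (G : Good p t0) (a : ℝ) : 0 < Ac p a := Ac_pos p G.hpos G.hr2 a
lemma hC (G : Good p t0) (a : ℝ) : 0 < Cc p a := Cc_pos p G.hpos G.hr1 a

lemma hm_lower (G : Good p t0) (a : ℝ) : t0 ≤ hm p a := by
  obtain ⟨b, hb⟩ := hm_attained p (G.hA a) (G.hC a)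
  exact hb ▸ G.hlow a b

lemma hm_strict (G : Good p t0) {a1 a2 lam mu : ℝ} (ha : a1 ≠ a2)
    (hl : 0 < lam) (hmu : 0 < mu) (hs : lam + mu = 1) :
    hm p (lam * a1 + mu * a2) < lam * hm p a1 + mu * hm p a2 := by
  obtain ⟨b1, hb1⟩ := hm_attained p (G.hA a1) (G.hC a1)
  obtain ⟨b2, hb2⟩ := hm_attained p (G.hA a2) (G.hC a2)
  calc hm p (lam * a1 + mu * a2) ≤ Phi p (lam * a1 + mu * a2) (lam * b1 + mu * b2) :=
        hm_le_Phi p (G.hA _) (G.hC _) _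
    _ < lam * Phi p a1 b1 + mu * Phi p a2 b2 :=
        Phi_strict p G.hpos G.hr1 G.hr2 G.hc1 G.hdiag G.hadiag a1 b1 a2 b2 lam mu ha hl hmu hs
    _ = lam * hm p a1 + mu * hm p a2 := by rw [hb1, hb2]

lemma exists_min (G : Good p t0) : ∃ a : ℝ, hm p a = t0 := by
  obtain ⟨a, b, hab⟩ := G.hmin
  exact ⟨a, le_antisymm (hab ▸ hm_le_Phi p (G.hA a) (G.hC a) b) (G.hm_lower a)⟩

lemma min_unique (G : Good p t0) {a1 a2 : ℝ} (h1 : hm p a1 = t0) (h2 : hm p a2 = t0) :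
    a1 = a2 := by
  by_contra hne
  have := G.hm_strict hne (by norm_num : (0:ℝ) < 1/2) (by norm_num : (0:ℝ) < 1/2) (by norm_num)
  rw [h1, h2] at this
  have hlb := G.hm_lower (1/2 * a1 + 1/2 * a2)
  linarith

lemma grow (G : Good p t0) {astar : ℝ} (h0 : hm p astar = t0) (e : ℝ) (he : e ≠ 0) (t : ℝ) :
    ∃ r : ℝ, 2 ≤ r ∧ t < hm p (astar + r * e) := by
  have hw : t0 < hm p (astar + e) := by
    rcases lt_or_eq_of_le (G.hm_lower (astar + e)) with h | h
    · exact h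
    · exact absurd (G.min_unique h.symm h0) (by intro hEq; apply he; linarith)
  set δ := hm p (astar + e) - t0 with hδdef
  have hδ : 0 < δ := by simp [hδdef]; linarith
  set r := max 2 ((t - t0)/δ + 1) with hrdef
  have hr2 : 2 ≤ r := le_max_left _ _
  have hr0 : 0 < r := by linarith
  have hrt : t - t0 < r * δ := by
    have h1 : (t - t0)/δ < r := lt_of_lt_of_le (by linarith) (le_max_right _ _)
    calc t - t0 = ((t - t0)/δ) * δ := by field_simp
      _ < r * δ := by exact mul_lt_mul_of_pos_right h1 hδ
  refine ⟨r, hr2, ?_⟩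
  have hne : astar ≠ astar + r * e := by
    intro hEq
    have : r * e = 0 := by linarith
    rcases mul_eq_zero.mp this with h | h
    · linarith
    · exact he h
  have hkey : (1 - 1/r) * astar + (1/r) * (astar + r * e) = astar + e := by
    field_simp
    ring
  have hlam : (0:ℝ) < 1 - 1/r := by
    have : 1/r ≤ 1/2 := by
      rw [div_le_div_iff₀ hr0 (by norm_num)]
      linarith
    linarith
  have hmu : (0:ℝ) < 1/r := by positivity
  have hstrict := G.hm_strict hne hlam hmu (by ring)
  rw [hkey, h0] at hstrict
  have hue := mul_lt_mul_of_pos_left hstrict hr0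
  have e1 : r * ((1 - 1/r) * t0 + 1/r * hm p (astar + r * e))
      = (r - 1) * t0 + hm p (astar + r * e) := by
    field_simp
  rw [e1] at hue
  have e2 : r * hm p (astar + e) = r * t0 + r * δ := by rw [hδdef]; ring
  linarith

lemma hm_cont (G : Good p t0) : Continuous (hm p) := by
  unfold hm Ac Bc Cc
  continuity

lemma sublevel (G : Good p t0) {astar t : ℝ} (h0 : hm p astar = t0) (ht : t0 < t) :
    ∃ aL aR : ℝ, aL < astar ∧ astar < aR ∧ hm p aL = t ∧ hm p aR = t ∧
      {a : ℝ | hm p a ≤ t} = Set.Icc aL aR := by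
  obtain ⟨rL, hrL2, hrLt⟩ := G.grow h0 (-1) (by norm_num) t
  obtain ⟨rR, hrR2, hrRt⟩ := G.grow h0 1 (by norm_num) t
  rw [show astar + rL * (-1) = astar - rL by ring] at hrLt
  rw [mul_one] at hrRt
  have hu : astar - rL < astar := by linarith
  have hv : astar < astar + rR := by linarith
  obtain ⟨aL, haLmem, haL⟩ := intermediate_value_Icc' hu.le (G.hm_cont).continuousOn
    (Set.mem_Icc.mpr ⟨h0 ▸ ht.le, hrLt.le⟩)
  obtain ⟨aR, haRmem, haR⟩ := intermediate_value_Icc hv.le (G.hm_cont).continuousOn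
    (Set.mem_Icc.mpr ⟨h0 ▸ ht.le, hrRt.le⟩)
  have haLs : aL < astar := by
    rcases haLmem.2.eq_or_lt with h | h
    · rw [h, h0] at haL; exact absurd haL (ne_of_lt ht)
    · exact h
  have haRs : astar < aR := by
    rcases haRmem.1.eq_or_lt with h | h
    · rw [← h, h0] at haR; exact absurd haR (ne_of_lt ht)
    · exact h
  refine ⟨aL, aR, haLs, haRs, haL, haR, ?_⟩
  ext a
  simp only [Set.mem_setOf_eq, Set.mem_Icc]
  constructor
  · intro ha
    constructor
    · by_contra hcon
      push_neg at hcon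
      have hd : 0 < astar - a := by linarith
      have hlam : 0 < (astar - aL)/(astar - a) := by apply div_pos <;> linarith
      have hmu : 0 < (aL - a)/(astar - a) := by apply div_pos <;> linarith
      have hsum : (astar - aL)/(astar - a) + (aL - a)/(astar - a) = 1 := by field_simp; ring
      have hcomb : (astar - aL)/(astar - a) * a + (aL - a)/(astar - a) * astar = aL := by
        field_simp; ring
      have hst := G.hm_strict (show a ≠ astar by intro h; rw [h] at hcon; linarith) hlam hmu hsum
      rw [hcomb, haL, h0] at hst
      have e3 : (astar - aL)/(astar - a) * t + (aL - a)/(astar - a) * t = t := by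
        rw [← add_mul, hsum, one_mul]
      have e4 := mul_le_mul_of_nonneg_left ha hlam.le
      have e5 := mul_lt_mul_of_pos_left ht hmu
      linarith
    · by_contra hcon
      push_neg at hcon
      have hd : 0 < a - astar := by linarith
      have hlam : 0 < (a - aR)/(a - astar) := by apply div_pos <;> linarith
      have hmu : 0 < (aR - astar)/(a - astar) := by apply div_pos <;> linarith
      have hsum : (a - aR)/(a - astar) + (aR - astar)/(a - astar) = 1 := by field_simp; ring
      have hcomb : (a - aR)/(a - astar) * astar + (aR - astar)/(a - astar) * a = aR := by
        field_simp; ring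
      have hst := G.hm_strict (show astar ≠ a by intro h; rw [← h] at hcon; linarith) hlam hmu hsum
      rw [hcomb, haR, h0] at hst
      have e3 : (a - aR)/(a - astar) * t + (aR - astar)/(a - astar) * t = t := by
        rw [← add_mul, hsum, one_mul]
      have e4 := mul_le_mul_of_nonneg_left ha hmu.le
      have e5 := mul_lt_mul_of_pos_left ht hlam
      linarith
  · rintro ⟨h1, h2⟩
    rcases h1.eq_or_lt with rfl | h1'
    · exact le_of_eq haL
    rcases h2.eq_or_lt with rfl | h2'
    · exact le_of_eq haR
    have hd : 0 < aR - aL := by linarith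
    have hlam : 0 < (aR - a)/(aR - aL) := by apply div_pos <;> linarith
    have hmu : 0 < (a - aL)/(aR - aL) := by apply div_pos <;> linarith
    have hsum : (aR - a)/(aR - aL) + (a - aL)/(aR - aL) = 1 := by field_simp; ring
    have hcomb : (aR - a)/(aR - aL) * aL + (a - aL)/(aR - aL) * aR = a := by
      field_simp; ring
    have hst := G.hm_strict (show aL ≠ aR by linarith) hlam hmu hsum
    rw [hcomb, haL, haR] at hst
    have e3 : (aR - a)/(aR - aL) * t + (a - aL)/(aR - aL) * t = t := by
      rw [← add_mul, hsum, one_mul]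
    linarith

lemma Phi_pos (G : Good p t0) (a b : ℝ) : 0 < Phi p a b := by
  have h1 : 0 ≤ p 1 1 * Real.exp (a+b) := mul_nonneg (G.hpos 1 1) (Real.exp_pos _).le
  have h2 : 0 ≤ p 0 1 * Real.exp b := mul_nonneg (G.hpos 0 1) (Real.exp_pos _).le
  have h3 : 0 ≤ p (-1) 1 * Real.exp (-a+b) := mul_nonneg (G.hpos (-1) 1) (Real.exp_pos _).le
  have h4 : 0 ≤ p 1 0 * Real.exp a := mul_nonneg (G.hpos 1 0) (Real.exp_pos _).le
  have h5 : 0 ≤ p (-1) 0 * Real.exp (-a) := mul_nonneg (G.hpos (-1) 0) (Real.exp_pos _).le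
  have h6 : 0 ≤ p 1 (-1) * Real.exp (a-b) := mul_nonneg (G.hpos 1 (-1)) (Real.exp_pos _).le
  have h7 : 0 ≤ p 0 (-1) * Real.exp (-b) := mul_nonneg (G.hpos 0 (-1)) (Real.exp_pos _).le
  have h8 : 0 ≤ p (-1) (-1) * Real.exp (-a-b) := mul_nonneg (G.hpos (-1) (-1)) (Real.exp_pos _).le
  unfold Phi
  rcases G.hr1 with h|h|h
  · have := mul_pos ((G.hpos 1 1).lt_of_ne (Ne.symm h)) (Real.exp_pos (a+b)); linarith
  · have := mul_pos ((G.hpos 0 1).lt_of_ne (Ne.symm h)) (Real.exp_pos b); linarith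
  · have := mul_pos ((G.hpos (-1) 1).lt_of_ne (Ne.symm h)) (Real.exp_pos (-a+b)); linarith

lemma t0_pos (G : Good p t0) : 0 < t0 := by
  obtain ⟨a, b, hab⟩ := G.hmin
  exact hab ▸ G.Phi_pos a b

lemma Iset_eq (G : Good p t0) (hp00 : p 0 0 = 0) (t : ℝ) :
    Iset p t = {x : ℝ | 0 < x ∧ hm p (-Real.log x) ≤ t} := by
  ext x
  simp only [Iset, Set.mem_setOf_eq]
  constructor
  · rintro ⟨hx, y, hy, hL⟩
    refine ⟨hx, ?_⟩
    rw [← exists_b_iff p G.hpos (G.hA _) (G.hC _) t]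
    exact ⟨-Real.log y, (Lker_iff p hp00 t x y hx hy).mp hL⟩
  · rintro ⟨hx, hhm⟩
    obtain ⟨b, hb⟩ := (exists_b_iff p G.hpos (G.hA _) (G.hC _) t).mpr hhm
    refine ⟨hx, Real.exp (-b), Real.exp_pos _, ?_⟩
    rw [Lker_iff p hp00 t x _ hx (Real.exp_pos _), Real.log_exp, neg_neg]
    exact hb

lemma Iset_empty (G : Good p t0) (hp00 : p 0 0 = 0) {t : ℝ} (ht : t < t0) :
    Iset p t = ∅ := by
  rw [G.Iset_eq hp00]
  ext x
  simp only [Set.mem_setOf_eq, Set.mem_empty_iff_false, iff_false, not_and]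
  intro _
  have := G.hm_lower (-Real.log x)
  linarith

lemma Iset_nonempty (G : Good p t0) (hp00 : p 0 0 = 0) {t : ℝ} (ht : t0 ≤ t) :
    (Iset p t).Nonempty := by
  obtain ⟨astar, hstar⟩ := G.exists_min
  refine ⟨Real.exp (-astar), ?_⟩
  rw [G.Iset_eq hp00]
  refine ⟨Real.exp_pos _, ?_⟩
  rw [Real.log_exp, neg_neg, hstar]
  exact ht

lemma Iset_singleton (G : Good p t0) (hp00 : p 0 0 = 0) :
    ∃ x : ℝ, Iset p t0 = {x} := by
  obtain ⟨astar, hstar⟩ := G.exists_min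
  refine ⟨Real.exp (-astar), ?_⟩
  rw [G.Iset_eq hp00]
  ext x
  simp only [Set.mem_setOf_eq, Set.mem_singleton_iff]
  constructor
  · rintro ⟨hx, hhm⟩
    have heq : hm p (-Real.log x) = t0 := le_antisymm hhm (G.hm_lower _)
    have := G.min_unique heq hstar
    rw [← this, neg_neg, Real.exp_log hx]
  · rintro rfl
    refine ⟨Real.exp_pos _, ?_⟩
    rw [Real.log_exp, neg_neg, hstar]

lemma Iset_Icc (G : Good p t0) (hp00 : p 0 0 = 0) {t : ℝ} (ht : t0 < t) :
    ∃ x2 x3 : ℝ, 0 < x2 ∧ x2 < x3 ∧ Iset p t = Set.Icc x2 x3 := by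
  obtain ⟨astar, hstar⟩ := G.exists_min
  obtain ⟨aL, aR, hL, hR, _, _, hset⟩ := G.sublevel hstar ht
  refine ⟨Real.exp (-aR), Real.exp (-aL), Real.exp_pos _, ?_, ?_⟩
  · exact Real.exp_lt_exp.mpr (by linarith)
  rw [G.Iset_eq hp00]
  ext x
  simp only [Set.mem_setOf_eq, Set.mem_Icc]
  constructor
  · rintro ⟨hx, hhm⟩
    have hmem : -Real.log x ∈ Set.Icc aL aR :=
      (Set.ext_iff.mp hset (-Real.log x)).mp hhm
    obtain ⟨m1, m2⟩ := hmem
    constructor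
    · rw [← Real.exp_log hx]
      exact Real.exp_le_exp.mpr (by linarith)
    · rw [← Real.exp_log hx]
      exact Real.exp_le_exp.mpr (by linarith)
  · rintro ⟨hx1, hx2⟩
    have hx : 0 < x := lt_of_lt_of_le (Real.exp_pos _) hx1
    refine ⟨hx, ?_⟩
    have hmem : -Real.log x ∈ Set.Icc aL aR := by
      constructor
      · have := Real.log_le_log hx hx2
        rw [Real.log_exp] at this
        linarith
      · have := Real.log_le_log (Real.exp_pos _) hx1
        rw [Real.log_exp] at this
        linarith
    exact (Set.ext_iff.mp hset (-Real.log x)).mpr hmem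

end Good
end HM

lemma Phi_swap (p : ℤ → ℤ → ℝ) (a b : ℝ) : Phi (fun k l => p l k) a b = Phi p b a := by
  unfold Phi
  ring_nf

lemma LkerZ_swap (p : ℤ → ℤ → ℝ) (t x y : ℝ) :
    LkerZ (fun k l => p l k) t y x = LkerZ p t x y := by
  unfold LkerZ
  rw [sum_expand, sum_expand, sum_expand, sum_expand,
    sum_expand, sum_expand, sum_expand, sum_expand]
  simp only [neg_neg, neg_zero, zpow_one, zpow_zero, zpow_neg]
  ring

lemma Jset_eq_Iset_swap (p : ℤ → ℤ → ℝ) (t : ℝ) :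
    Jset p t = Iset (fun k l => p l k) t := by
  unfold Jset Iset
  ext y
  simp only [Set.mem_setOf_eq]
  constructor
  · rintro ⟨hy, x, hx, hL⟩
    exact ⟨hy, x, hx, by rw [LkerZ_swap]; exact hL⟩
  · rintro ⟨hy, x, hx, hL⟩
    exact ⟨hy, x, hx, by rw [← LkerZ_swap]; exact hL⟩

lemma mkGood (p : ℤ → ℤ → ℝ)
    (hpos : ∀ k l : ℤ, 0 ≤ p k l)
    (hnz : ∀ i : Fin 8, cyc p i ≠ 0 ∨ cyc p (i + 1) ≠ 0 ∨ cyc p (i + 2) ≠ 0)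
    (hp00 : p 0 0 = 0)
    (t0 : ℝ) (ht0 : IsLeast (Set.range (phi p)) t0) : Good p t0 := by
  have h6 := hnz 6; have h2 := hnz 2; have h0 := hnz 0; have h1 := hnz 1; have h3 := hnz 3
  simp only [cyc] at h6 h2 h0 h1 h3
  norm_num at h6 h2 h0 h1 h3
  refine ⟨hpos, by tauto, by tauto, by tauto, by tauto, by tauto, ?_, ?_⟩
  · intro a b
    have := ht0.2 (Set.mem_range_self (f := phi p) (a, b))
    rwa [phi_eq p hp00 a b] at this
  · obtain ⟨z, hz⟩ := ht0.1
    exact ⟨z.1, z.2, by rw [← phi_eq p hp00 z.1 z.2]; exact hz⟩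

set_option maxHeartbeats 2000000 in
lemma mkGoodT (p : ℤ → ℤ → ℝ)
    (hpos : ∀ k l : ℤ, 0 ≤ p k l)
    (hnz : ∀ i : Fin 8, cyc p i ≠ 0 ∨ cyc p (i + 1) ≠ 0 ∨ cyc p (i + 2) ≠ 0)
    (hp00 : p 0 0 = 0)
    (t0 : ℝ) (ht0 : IsLeast (Set.range (phi p)) t0) : Good (fun k l => p l k) t0 := by
  have h4 := hnz 4; have h0 := hnz 0; have h6 := hnz 6; have h5 := hnz 5; have h3 := hnz 3
  simp only [cyc] at h4 h0 h6 h5 h3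
  norm_num at h4 h0 h6 h5 h3
  refine ⟨fun k l => hpos l k,
    show p 1 1 ≠ 0 ∨ p 1 0 ≠ 0 ∨ p 1 (-1) ≠ 0 by tauto,
    show p (-1) 1 ≠ 0 ∨ p (-1) 0 ≠ 0 ∨ p (-1) (-1) ≠ 0 by tauto,
    show p 1 1 ≠ 0 ∨ p 0 1 ≠ 0 ∨ p (-1) 1 ≠ 0 by tauto,
    show p 0 1 ≠ 0 ∨ p (-1) 1 ≠ 0 ∨ p (-1) 0 ≠ 0 by tauto,
    show p (-1) 0 ≠ 0 ∨ p (-1) (-1) ≠ 0 ∨ p 0 (-1) ≠ 0 by tauto, ?_, ?_⟩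
  · intro a b
    have := ht0.2 (Set.mem_range_self (f := phi p) (b, a))
    rw [phi_eq p hp00 b a] at this
    rwa [Phi_swap]
  · obtain ⟨z, hz⟩ := ht0.1
    refine ⟨z.2, z.1, ?_⟩
    rw [Phi_swap, ← phi_eq p hp00 z.1 z.2]
    exact hz

/-- the sets `I_t` and `J_t` are empty for `t < t₀`, singletons for `t = t₀`,
and compact intervals with nonempty interior for `t > t₀`; moreover
`t₀ = inf {t > 0 : I_t ≠ ∅}` and `t₀` is the unique `t > 0` with `I_t` a singleton. -/
theorem Iset_Jset_structure (p : ℤ → ℤ → ℝ)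
    (hpos : ∀ k l : ℤ, 0 ≤ p k l)
    (hsum : ∑ k ∈ Finset.Icc (-1 : ℤ) 1, ∑ l ∈ Finset.Icc (-1 : ℤ) 1, p k l = 1)
    (hp00 : p 0 0 = 0)
    (hsmall : ∀ k l : ℤ, (1 < |k| ∨ 1 < |l|) → p k l = 0)
    (hnz : ∀ i : Fin 8, cyc p i ≠ 0 ∨ cyc p (i + 1) ≠ 0 ∨ cyc p (i + 2) ≠ 0)
    (t0 : ℝ) (ht0 : IsLeast (Set.range (phi p)) t0) :
    (∀ t : ℝ, 0 < t → t < t0 → Iset p t = ∅ ∧ Jset p t = ∅) ∧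
    ((∃ x : ℝ, Iset p t0 = {x}) ∧ (∃ y : ℝ, Jset p t0 = {y})) ∧
    (∀ t : ℝ, t0 < t →
      (∃ x2 x3 : ℝ, 0 < x2 ∧ x2 < x3 ∧ Iset p t = Set.Icc x2 x3) ∧
      (∃ y2 y3 : ℝ, 0 < y2 ∧ y2 < y3 ∧ Jset p t = Set.Icc y2 y3)) ∧
    t0 = sInf {t : ℝ | 0 < t ∧ (Iset p t).Nonempty} ∧
    (∀ t : ℝ, 0 < t → ((∃ x : ℝ, Iset p t = {x}) ↔ t = t0)) := by
  have G : Good p t0 := mkGood p hpos hnz hp00 t0 ht0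
  have GT : Good (fun k l => p l k) t0 := mkGoodT p hpos hnz hp00 t0 ht0
  have hp00T : (fun k l : ℤ => p l k) 0 0 = 0 := hp00
  refine ⟨?_, ⟨G.Iset_singleton hp00, ?_⟩, ?_, ?_, ?_⟩
  · intro t _ ht
    exact ⟨G.Iset_empty hp00 ht, by rw [Jset_eq_Iset_swap]; exact GT.Iset_empty hp00T ht⟩
  · rw [Jset_eq_Iset_swap]
    exact GT.Iset_singleton hp00T
  · intro t ht
    exact ⟨G.Iset_Icc hp00 ht, by rw [Jset_eq_Iset_swap]; exact GT.Iset_Icc hp00T ht⟩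
  · have hset : {t : ℝ | 0 < t ∧ (Iset p t).Nonempty} = Set.Ici t0 := by
      ext t
      simp only [Set.mem_setOf_eq, Set.mem_Ici]
      constructor
      · rintro ⟨htp, hne⟩
        by_contra hlt
        push_neg at hlt
        rw [G.Iset_empty hp00 hlt] at hne
        exact Set.not_nonempty_empty hne
      · intro hle
        exact ⟨lt_of_lt_of_le G.t0_pos hle, G.Iset_nonempty hp00 hle⟩
    rw [hset, csInf_Ici]
  · intro t htp
    constructor
    · rintro ⟨x, hx⟩
      rcases lt_trichotomy t t0 with h | h | h
      · exfalso
        rw [G.Iset_empty hp00 h] at hx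
        exact absurd (hx ▸ Set.mem_singleton x) (Set.notMem_empty x)
      · exact h
      · exfalso
        obtain ⟨x2, x3, _, hlt, hIcc⟩ := G.Iset_Icc hp00 h
        rw [hIcc] at hx
        have h2 : x2 ∈ ({x} : Set ℝ) := hx ▸ Set.left_mem_Icc.mpr hlt.le
        have h3 : x3 ∈ ({x} : Set ℝ) := hx ▸ Set.right_mem_Icc.mpr hlt.le
        rw [Set.mem_singleton_iff] at h2 h3
        rw [h2, h3] at hlt
        exact lt_irrefl x hlt
    · rintro rfl
      exact G.Iset_singleton hp00
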